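/- arXiv:1402.2358 — 2 statements merged into one kernel-verified Lean document; each statement's English description precedes it below -/
import Mathlib

section
/- Let m ≥ 1 and let a_1, …, a_m be nonnegative integers. Then the m×m determinant det[c_{a_i+a_j}/(a_i+a_j)!] is nonnegative. -/
open MeasureTheory Real Nat

noncomputable def cauchy2 (n : ℕ) : ℝ :=
  ∫ x in (0:ℝ)..1, ∏ i ∈ Finset.range n, (x + i)

/-- The moment density: `c_n/n! = ∫₀¹ gden t * tⁿ dt`. -/
noncomputable def gden (t : ℝ) : ℝ :=
  (t * (1 - t) * ((Real.log (t / (1 - t))) ^ 2 + π ^ 2))⁻¹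

noncomputable def bker (n : ℕ) (x t : ℝ) : ℝ :=
  Real.sin (π * x) * (Real.exp ((x + n - 1) * Real.log t) * Real.exp (-x * Real.log (1 - t)))

lemma sin_exp_integral (c : ℝ) :
    ∫ x in (0:ℝ)..1, Real.sin (π * x) * Real.exp (c * x)
      = π * (Real.exp c + 1) / (c ^ 2 + π ^ 2) := by
  have hD : c ^ 2 + π ^ 2 ≠ 0 := by positivity
  have hder : ∀ x ∈ Set.uIcc (0:ℝ) 1, HasDerivAt
      (fun x => Real.exp (c * x) * (c * Real.sin (π * x) - π * Real.cos (π * x)) / (c ^ 2 + π ^ 2))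
      (Real.sin (π * x) * Real.exp (c * x)) x := by
    intro x _
    have h1 : HasDerivAt (fun x => Real.exp (c * x)) (Real.exp (c * x) * c) x := by
      simpa [Function.comp_def] using (Real.hasDerivAt_exp (c*x)).comp x ((hasDerivAt_id x).const_mul c)
    have h2 : HasDerivAt (fun x => Real.sin (π * x)) (Real.cos (π * x) * π) x := by
      simpa [Function.comp_def] using (Real.hasDerivAt_sin (π*x)).comp x ((hasDerivAt_id x).const_mul π)
    have h3 : HasDerivAt (fun x => Real.cos (π * x)) (-Real.sin (π * x) * π) x := by
      simpa [Function.comp_def] using (Real.hasDerivAt_cos (π*x)).comp x ((hasDerivAt_id x).const_mul π)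
    have h4 := ((h1.mul ((h2.const_mul c).sub (h3.const_mul π))).div_const (c ^ 2 + π ^ 2))
    refine h4.congr_deriv ?_
    simp only [Pi.sub_apply]
    rw [div_eq_iff hD]
    ring
  have hcont : IntervalIntegrable (fun x => Real.sin (π * x) * Real.exp (c * x)) volume 0 1 :=
    (Continuous.mul (Real.continuous_sin.comp (continuous_const.mul continuous_id))
      (Real.continuous_exp.comp (continuous_const.mul continuous_id))).intervalIntegrable 0 1
  rw [intervalIntegral.integral_eq_sub_of_hasDerivAt hder hcont]
  simp [Real.sin_pi, Real.cos_pi, Real.sin_zero, Real.cos_zero]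
  ring

lemma bker_integral_x (n : ℕ) {t : ℝ} (ht : t ∈ Set.Ioo (0:ℝ) 1) :
    ∫ x in (0:ℝ)..1, bker n x t = π * (gden t * t ^ n) := by
  obtain ⟨ht0, ht1⟩ := ht
  have h1t : (0:ℝ) < 1 - t := by linarith
  set c : ℝ := Real.log (t / (1 - t)) with hc
  have hcc : c = Real.log t - Real.log (1 - t) := Real.log_div ht0.ne' h1t.ne'
  have hre : ∀ x : ℝ, bker n x t
      = Real.exp (((n:ℝ) - 1) * Real.log t) * (Real.sin (π * x) * Real.exp (c * x)) := by
    intro x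
    rw [bker, hcc]
    have harg : (x + (n:ℝ) - 1) * Real.log t + -x * Real.log (1 - t)
        = ((n:ℝ) - 1) * Real.log t + (Real.log t - Real.log (1 - t)) * x := by ring
    rw [← Real.exp_add, harg, Real.exp_add]
    ring
  have : ∫ x in (0:ℝ)..1, bker n x t
      = Real.exp (((n:ℝ) - 1) * Real.log t) * ∫ x in (0:ℝ)..1, Real.sin (π * x) * Real.exp (c * x) := by
    simp_rw [hre]
    exact intervalIntegral.integral_const_mul _ _
  rw [this, sin_exp_integral]
  have hexpc : Real.exp c = t / (1 - t) := by
    rw [hcc, Real.exp_sub, Real.exp_log ht0, Real.exp_log h1t]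
  have hexpn : Real.exp (((n:ℝ) - 1) * Real.log t) = t ^ n / t := by
    rw [sub_mul, Real.exp_sub, one_mul, Real.exp_log ht0, Real.exp_nat_mul, Real.exp_log ht0]
  rw [hexpc, hexpn, gden]
  have hden : (0:ℝ) < c ^ 2 + π ^ 2 := by positivity
  field_simp
  ring

lemma beta_real (n : ℕ) {x : ℝ} (hx : x ∈ Set.Ioo (0:ℝ) 1) :
    IntegrableOn (fun t : ℝ => t ^ (x + n - 1) * (1 - t) ^ (-x)) (Set.Ioc 0 1) volume ∧
    ∫ t in Set.Ioc (0:ℝ) 1, t ^ (x + n - 1) * (1 - t) ^ (-x)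
      = Real.Gamma (x + n) * Real.Gamma (1 - x) / n ! := by
  obtain ⟨hx0, hx1⟩ := hx
  set u : ℂ := (x : ℂ) + n with hu
  set v : ℂ := 1 - (x : ℂ) with hv
  have hure : 0 < u.re := by simp [hu]; positivity
  have hvre : 0 < v.re := by simp [hv]; linarith
  have hconv := Complex.betaIntegral_convergent hure hvre
  have key := Complex.Gamma_mul_Gamma_eq_betaIntegral hure hvre
  have haec : ∀ᵐ s : ℝ ∂volume, s ∈ Set.Ioc (0:ℝ) 1 →
      ((s:ℂ) ^ (u - 1) * (1 - (s:ℂ)) ^ (v - 1))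
        = ((s ^ (x + n - 1) * (1 - s) ^ (-x) : ℝ) : ℂ) := by
    filter_upwards [(Set.countable_singleton (1:ℝ)).ae_notMem volume] with s hs1 hs
    have hs0 : 0 < s := hs.1
    have hs1' : s < 1 := lt_of_le_of_ne hs.2 (by simpa using hs1)
    have e1 : (s:ℂ) ^ (u - 1) = ((s ^ (x + n - 1) : ℝ) : ℂ) := by
      rw [Complex.ofReal_cpow hs0.le]
      congr 1
      push_cast [hu]; ring
    have e2 : (1 - (s:ℂ)) ^ (v - 1) = (((1 - s) ^ (-x) : ℝ) : ℂ) := by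
      rw [show (1 - (s:ℂ)) = ((1 - s : ℝ) : ℂ) by push_cast; ring,
        Complex.ofReal_cpow (by linarith)]
      congr 1
      push_cast [hv]; ring
    rw [e1, e2, ← Complex.ofReal_mul]
  have hint : IntegrableOn (fun t : ℝ => t ^ (x + n - 1) * (1 - t) ^ (-x)) (Set.Ioc 0 1) volume := by
    have h1 : IntegrableOn (fun s : ℝ => (s:ℂ) ^ (u - 1) * (1 - (s:ℂ)) ^ (v - 1))
        (Set.Ioc 0 1) volume :=
      (intervalIntegrable_iff_integrableOn_Ioc_of_le (by norm_num : (0:ℝ) ≤ 1)).mp hconv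
    have h2 : IntegrableOn (fun s : ℝ => ((s ^ (x + n - 1) * (1 - s) ^ (-x) : ℝ) : ℂ))
        (Set.Ioc 0 1) volume :=
      h1.congr ((ae_restrict_iff' measurableSet_Ioc).mpr haec)
    simpa [IntegrableOn] using h2.re
  refine ⟨hint, ?_⟩
  have hbeta : Complex.betaIntegral u v
      = ((∫ t in Set.Ioc (0:ℝ) 1, t ^ (x + n - 1) * (1 - t) ^ (-x) : ℝ) : ℂ) := by
    rw [Complex.betaIntegral, intervalIntegral.integral_of_le (by norm_num : (0:ℝ) ≤ 1)]
    rw [setIntegral_congr_ae measurableSet_Ioc haec]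
    exact integral_ofReal
  rw [hbeta] at key
  have huv : u + v = ((n:ℂ) + 1) := by push_cast [hu, hv]; ring
  rw [huv, Complex.Gamma_nat_eq_factorial] at key
  have hux : u = ((x + n : ℝ) : ℂ) := by push_cast [hu]; ring
  have hvx : v = ((1 - x : ℝ) : ℂ) := by push_cast [hv]; ring
  rw [hux, hvx, Complex.Gamma_ofReal, Complex.Gamma_ofReal] at key
  have key2 : (Real.Gamma (x + n) * Real.Gamma (1 - x) : ℝ)
      = (n ! : ℝ) * ∫ t in Set.Ioc (0:ℝ) 1, t ^ (x + n - 1) * (1 - t) ^ (-x) := by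
    exact_mod_cast key
  have hfac : (n ! : ℝ) ≠ 0 := by positivity
  field_simp [key2]
  linear_combination -key2

lemma bker_eq_rpow (n : ℕ) (x : ℝ) {t : ℝ} (ht : t ∈ Set.Ioo (0:ℝ) 1) :
    bker n x t = Real.sin (π * x) * (t ^ (x + n - 1) * (1 - t) ^ (-x)) := by
  obtain ⟨ht0, ht1⟩ := ht
  rw [bker, Real.rpow_def_of_pos ht0, Real.rpow_def_of_pos (by linarith : (0:ℝ) < 1 - t)]
  ring_nf

lemma bker_ae_eq (n : ℕ) (x : ℝ) : ∀ᵐ t : ℝ ∂volume, t ∈ Set.Ioc (0:ℝ) 1 →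
    bker n x t = Real.sin (π * x) * (t ^ (x + n - 1) * (1 - t) ^ (-x)) := by
  filter_upwards [(Set.countable_singleton (1:ℝ)).ae_notMem volume] with t ht1 ht
  exact bker_eq_rpow n x ⟨ht.1, lt_of_le_of_ne ht.2 (by simpa using ht1)⟩

lemma bker_integrable_t (n : ℕ) {x : ℝ} (hx : x ∈ Set.Ioo (0:ℝ) 1) :
    IntegrableOn (fun t => bker n x t) (Set.Ioc 0 1) volume :=
  (((beta_real n hx).1.const_mul (Real.sin (π * x))).congr
    ((ae_restrict_iff' measurableSet_Ioc).mpr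
      ((bker_ae_eq n x).mono fun t h ht => (h ht).symm)))

lemma bker_integral_t (n : ℕ) {x : ℝ} (hx : x ∈ Set.Ioo (0:ℝ) 1) :
    ∫ t in Set.Ioc (0:ℝ) 1, bker n x t
      = Real.sin (π * x) * (Real.Gamma (x + n) * Real.Gamma (1 - x) / n !) := by
  rw [setIntegral_congr_ae measurableSet_Ioc (bker_ae_eq n x), integral_const_mul,
    (beta_real n hx).2]

lemma Gamma_add_nat' (n : ℕ) {x : ℝ} (hx : 0 < x) :
    Real.Gamma (x + n) = (∏ i ∈ Finset.range n, (x + i)) * Real.Gamma x := by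
  induction n with
  | zero => simp
  | succ k ih =>
    have : x + (k + 1 : ℕ) = (x + k) + 1 := by push_cast; ring
    rw [this, Real.Gamma_add_one (by positivity), ih, Finset.prod_range_succ]
    ring

lemma prod_div_factorial (n : ℕ) {x : ℝ} (hx : x ∈ Set.Ioo (0:ℝ) 1) :
    (∏ i ∈ Finset.range n, (x + i)) / n !
      = (1/π) * (Real.sin (π * x) * (Real.Gamma (x + n) * Real.Gamma (1 - x) / n !)) := by
  obtain ⟨hx0, hx1⟩ := hx
  have hsin : 0 < Real.sin (π * x) :=
    Real.sin_pos_of_pos_of_lt_pi (by positivity) (by nlinarith [Real.pi_pos])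
  have hG : 0 < Real.Gamma x := Real.Gamma_pos_of_pos hx0
  have hrefl := Real.Gamma_mul_Gamma_one_sub x
  have hGamma1x : Real.Gamma (1 - x) = π / (Real.sin (π * x) * Real.Gamma x) := by
    field_simp at hrefl ⊢
    linarith [hrefl]
  rw [Gamma_add_nat' n hx0, hGamma1x]
  have hfac : (0:ℝ) < n ! := by positivity
  field_simp
  ring
  exact (mul_inv_cancel₀ (by rw [mul_comm]; exact hsin.ne')).symm

lemma gden_nonneg {t : ℝ} (ht : t ∈ Set.Ioc (0:ℝ) 1) : 0 ≤ gden t := by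
  have h1 : (0:ℝ) ≤ 1 - t := by linarith [ht.2]
  have := ht.1
  rw [gden]
  positivity

lemma bker_measurable (n : ℕ) :
    Measurable (Function.uncurry fun x t => bker n x t) := by
  unfold bker Function.uncurry
  apply Measurable.mul
  · exact (Real.continuous_sin.comp (continuous_const.mul continuous_fst)).measurable
  · exact ((Real.measurable_exp.comp
      (((measurable_fst.add_const _).sub_const _).mul (Real.measurable_log.comp measurable_snd))).mul
      (Real.measurable_exp.comp ((measurable_fst.neg).mul
        (Real.measurable_log.comp (measurable_const.sub measurable_snd)))))

lemma gden_measurable : Measurable gden := by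
  unfold gden
  apply Measurable.inv
  exact ((measurable_id.mul (measurable_const.sub measurable_id)).mul
    (((Real.measurable_log.comp (measurable_id.div (measurable_const.sub measurable_id))).pow_const 2).add
      measurable_const))

lemma key_moment (n : ℕ) :
    IntegrableOn (fun t => gden t * t ^ n) (Set.Ioc 0 1) volume ∧
    cauchy2 n / n ! = ∫ t in Set.Ioc (0:ℝ) 1, gden t * t ^ n := by
  have hpi : (0:ℝ) < π := Real.pi_pos
  set ψ : ℝ → ℝ := fun x => (∏ i ∈ Finset.range n, (x + i)) / n ! with hψ
  have hψcont : Continuous ψ := by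
    apply Continuous.div_const
    exact continuous_finset_prod _ fun i _ => continuous_id.add continuous_const
  -- step0
  have step0 : cauchy2 n / n ! = ∫ x in Set.Ioc (0:ℝ) 1, ψ x := by
    rw [cauchy2, intervalIntegral.integral_of_le (by norm_num : (0:ℝ) ≤ 1), ← integral_div]
  -- ae facts on Ioo
  have haeIoo : ∀ᵐ x : ℝ ∂(volume.restrict (Set.Ioc (0:ℝ) 1)), x ∈ Set.Ioo (0:ℝ) 1 := by
    rw [ae_restrict_iff' measurableSet_Ioc]
    filter_upwards [(Set.countable_singleton (1:ℝ)).ae_notMem volume] with x hx1 hx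
    exact ⟨hx.1, lt_of_le_of_ne hx.2 (by simpa using hx1)⟩
  -- step1 : per x in Ioo
  have step1 : ∀ x ∈ Set.Ioo (0:ℝ) 1,
      ψ x = ∫ t in Set.Ioc (0:ℝ) 1, (1/π) * bker n x t := by
    intro x hx
    rw [integral_const_mul, bker_integral_t n hx, hψ]
    exact prod_div_factorial n hx
  -- nonnegativity of ψ and bker
  have hψ0 : ∀ x ∈ Set.Ioo (0:ℝ) 1, 0 ≤ ψ x := by
    intro x hx
    have h1 : 0 ≤ ∏ i ∈ Finset.range n, (x + i) :=
      Finset.prod_nonneg fun i _ => by have := hx.1; positivity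
    have h2 : (0:ℝ) < n ! := by positivity
    exact div_nonneg h1 h2.le
  have hbker0 : ∀ x ∈ Set.Icc (0:ℝ) 1, ∀ t : ℝ, 0 ≤ (1/π) * bker n x t := by
    intro x hx t
    have hsin : 0 ≤ Real.sin (π * x) :=
      Real.sin_nonneg_of_nonneg_of_le_pi (by nlinarith [hx.1])
        (by nlinarith [hx.2, Real.pi_pos])
    rw [bker]
    positivity
  -- left side as lintegral
  have hψint : IntegrableOn ψ (Set.Ioc 0 1) volume := hψcont.integrableOn_Ioc
  have hψnn : 0 ≤ᵐ[volume.restrict (Set.Ioc (0:ℝ) 1)] ψ :=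
    haeIoo.mono fun x hx => hψ0 x hx
  have hL1 : ∫ x in Set.Ioc (0:ℝ) 1, ψ x
      = (∫⁻ x in Set.Ioc (0:ℝ) 1, ENNReal.ofReal (ψ x)).toReal :=
    integral_eq_lintegral_of_nonneg_ae hψnn hψcont.aestronglyMeasurable.restrict
  have hL2 : ∫⁻ x in Set.Ioc (0:ℝ) 1, ENNReal.ofReal (ψ x)
      = ∫⁻ x in Set.Ioc (0:ℝ) 1, ∫⁻ t in Set.Ioc (0:ℝ) 1,
          ENNReal.ofReal ((1/π) * bker n x t) := by
    refine lintegral_congr_ae (haeIoo.mono fun x hx => ?_)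
    dsimp only
    rw [step1 x hx]
    exact ofReal_integral_eq_lintegral_ofReal
      ((bker_integrable_t n hx).const_mul _)
      (Filter.Eventually.of_forall fun t =>
        hbker0 x (Set.mem_Icc_of_Ioo hx) t)
  have hswap : ∫⁻ x in Set.Ioc (0:ℝ) 1, ∫⁻ t in Set.Ioc (0:ℝ) 1,
        ENNReal.ofReal ((1/π) * bker n x t)
      = ∫⁻ t in Set.Ioc (0:ℝ) 1, ∫⁻ x in Set.Ioc (0:ℝ) 1,
        ENNReal.ofReal ((1/π) * bker n x t) := by
    refine lintegral_lintegral_swap ?_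
    exact (((bker_measurable n).const_mul _).ennreal_ofReal).aemeasurable
  have hR1 : ∀ t ∈ Set.Ioo (0:ℝ) 1,
      ∫⁻ x in Set.Ioc (0:ℝ) 1, ENNReal.ofReal ((1/π) * bker n x t)
        = ENNReal.ofReal (gden t * t ^ n) := by
    intro t ht
    have hxcont : Continuous fun x => (1/π) * bker n x t := by
      unfold bker; fun_prop
    have hint : IntegrableOn (fun x => (1/π) * bker n x t) (Set.Ioc 0 1) volume :=
      hxcont.integrableOn_Ioc
    have hnn : 0 ≤ᵐ[volume.restrict (Set.Ioc (0:ℝ) 1)] fun x => (1/π) * bker n x t :=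
      haeIoo.mono fun x hx => hbker0 x ⟨hx.1.le, hx.2.le⟩ t
    rw [← ofReal_integral_eq_lintegral_ofReal hint hnn]
    congr 1
    rw [integral_const_mul, ← intervalIntegral.integral_of_le (by norm_num : (0:ℝ) ≤ 1),
      bker_integral_x n ht]
    field_simp
  have hR2 : ∫⁻ t in Set.Ioc (0:ℝ) 1, ∫⁻ x in Set.Ioc (0:ℝ) 1,
        ENNReal.ofReal ((1/π) * bker n x t)
      = ∫⁻ t in Set.Ioc (0:ℝ) 1, ENNReal.ofReal (gden t * t ^ n) :=
    lintegral_congr_ae (haeIoo.mono fun t ht => hR1 t ht)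
  have hchain : ∫⁻ x in Set.Ioc (0:ℝ) 1, ENNReal.ofReal (ψ x)
      = ∫⁻ t in Set.Ioc (0:ℝ) 1, ENNReal.ofReal (gden t * t ^ n) := by
    rw [hL2, hswap, hR2]
  have hfin : ∫⁻ t in Set.Ioc (0:ℝ) 1, ENNReal.ofReal (gden t * t ^ n) < ⊤ := by
    rw [← hchain]
    exact (hasFiniteIntegral_iff_ofReal hψnn).mp hψint.hasFiniteIntegral
  have hGmeas : Measurable fun t : ℝ => gden t * t ^ n :=
    gden_measurable.mul (measurable_id.pow_const n)
  have hGnn : 0 ≤ᵐ[volume.restrict (Set.Ioc (0:ℝ) 1)] fun t => gden t * t ^ n :=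
    haeIoo.mono fun t ht =>
      mul_nonneg (gden_nonneg ⟨ht.1, ht.2.le⟩) (pow_nonneg ht.1.le n)
  have hGint : IntegrableOn (fun t => gden t * t ^ n) (Set.Ioc 0 1) volume :=
    ⟨hGmeas.aestronglyMeasurable.restrict, (hasFiniteIntegral_iff_ofReal hGnn).mpr hfin⟩
  refine ⟨hGint, ?_⟩
  rw [step0, hL1, hchain,
    ← integral_eq_lintegral_of_nonneg_ae hGnn hGmeas.aestronglyMeasurable.restrict]

theorem cauchy2_det_factorial_nonneg (m : ℕ) (hm : 1 ≤ m) (a : Fin m → ℕ) :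
    0 ≤ Matrix.det (Matrix.of fun i j : Fin m =>
      cauchy2 (a i + a j) / ((a i + a j)! : ℝ)) := by
  set M : Matrix (Fin m) (Fin m) ℝ := Matrix.of fun i j : Fin m =>
      cauchy2 (a i + a j) / ((a i + a j)! : ℝ) with hM
  have hMij : ∀ i j, M i j = ∫ t in Set.Ioc (0:ℝ) 1, gden t * t ^ (a i + a j) := by
    intro i j
    exact (key_moment (a i + a j)).2
  have hherm : M.IsHermitian := by
    refine Matrix.IsHermitian.ext fun i j => ?_
    simp only [hM, Matrix.of_apply, RCLike.star_def, starRingEnd_apply, star_trivial]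
    rw [add_comm (a j) (a i)]
  have hpsd : M.PosSemidef := by
    refine ⟨hherm, fun v => ?_⟩
    have hexp : (v.sum fun i xi => v.sum fun j xj => star xi * M i j * xj)
        = ∑ i, ∑ j, (v i * v j) * M i j := by
      rw [Finsupp.sum_fintype _ _ (by simp)]
      refine Finset.sum_congr rfl fun i _ => ?_
      rw [Finsupp.sum_fintype _ _ (by simp)]
      refine Finset.sum_congr rfl fun j _ => ?_
      simp only [star_trivial]
      ring
    rw [hexp]
    have hint : ∀ i j : Fin m, Integrable
        (fun t => (v i * v j) * (gden t * t ^ (a i + a j)))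
        (volume.restrict (Set.Ioc (0:ℝ) 1)) :=
      fun i j => ((key_moment (a i + a j)).1.const_mul _)
    have hsum : ∑ i, ∑ j, (v i * v j) * M i j
        = ∫ t in Set.Ioc (0:ℝ) 1, ∑ i, ∑ j,
            (v i * v j) * (gden t * t ^ (a i + a j)) := by
      rw [integral_finset_sum _ (fun i _ => integrable_finset_sum _ (fun j _ => hint i j))]
      refine Finset.sum_congr rfl fun i _ => ?_
      rw [integral_finset_sum _ (fun j _ => hint i j)]
      refine Finset.sum_congr rfl fun j _ => ?_
      rw [hMij i j, integral_const_mul]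
    rw [hsum]
    refine setIntegral_nonneg measurableSet_Ioc fun t ht => ?_
    have hpt : ∑ i, ∑ j, (v i * v j) * (gden t * t ^ (a i + a j))
        = gden t * (∑ i, v i * t ^ (a i)) ^ 2 := by
      rw [sq, Finset.sum_mul_sum, Finset.mul_sum]
      refine Finset.sum_congr rfl fun i _ => ?_
      rw [Finset.mul_sum]
      refine Finset.sum_congr rfl fun j _ => ?_
      rw [pow_add]
      ring
    rw [hpt]
    exact mul_nonneg (gden_nonneg ht) (sq_nonneg _)
  have hdet := hherm.det_eq_prod_eigenvalues
  rw [hdet]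
  have : ∀ i, (0:ℝ) ≤ hherm.eigenvalues i := hpsd.eigenvalues_nonneg
  exact Finset.prod_nonneg fun i _ => by simpa using this i
end

section
/- The generating function identity t/((1+t) ln(1+t)) = Σ_{n=0}^∞ (−1)^n c_n t^n/n! holds for all real t with |t| sufficiently small (in particular for |t| < 1, t ≠ 0, with value 1 at t = 0). -/
open MeasureTheory Real Nat

private lemma prod_nonneg' {x : ℝ} (hx0 : 0 ≤ x) (n : ℕ) :
    0 ≤ ∏ i ∈ Finset.range n, (x + i) :=
  Finset.prod_nonneg fun i _ => by positivity

private lemma prod_le_fact {x : ℝ} (hx1 : x ≤ 1) (n : ℕ) (hx0 : 0 ≤ x) :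
    ∏ i ∈ Finset.range n, (x + i) ≤ (n ! : ℝ) := by
  have h : (n ! : ℝ) = ∏ i ∈ Finset.range n, ((i : ℝ) + 1) := by
    rw [← Finset.prod_range_add_one_eq_factorial n]
    push_cast
    exact (Finset.prod_congr rfl fun i _ => by ring)
  rw [h]
  apply Finset.prod_le_prod (fun i _ => by positivity)
  intro i _; linarith

private lemma hasSum_binom {x u : ℝ} (hx0 : 0 ≤ x) (hx1 : x ≤ 1) (hu : |u| < 1) :
    HasSum (fun n : ℕ => (∏ i ∈ Finset.range n, (x + i)) / (n ! : ℝ) * u ^ n)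
      ((1 - u) ^ (-x)) := by
  set a : ℕ → ℝ := fun n => (∏ i ∈ Finset.range n, (x + i)) / (n ! : ℝ) with ha
  have ha0 : ∀ n, 0 ≤ a n := fun n => by
    apply div_nonneg (prod_nonneg' hx0 n); positivity
  have ha1 : ∀ n, a n ≤ 1 := fun n => by
    rw [ha]; simp only
    rw [div_le_one (by positivity : (0:ℝ) < (n ! : ℝ))]
    exact prod_le_fact hx1 n hx0
  have hrec : ∀ n : ℕ, a (n + 1) * (n + 1) = a n * (x + n) := by
    intro n
    have hne : (n ! : ℝ) ≠ 0 := by positivity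
    rw [ha]; simp only [Finset.prod_range_succ, Nat.factorial_succ]
    push_cast
    field_simp
  have hsum : ∀ v : ℝ, |v| < 1 → Summable (fun n => a n * v ^ n) := by
    intro v hv
    apply Summable.of_norm_bounded (summable_geometric_of_lt_one (abs_nonneg v) hv)
    intro n
    rw [norm_mul, norm_pow, Real.norm_eq_abs, Real.norm_eq_abs, abs_of_nonneg (ha0 n)]
    calc a n * |v| ^ n ≤ 1 * |v| ^ n := by gcongr; exact ha1 n
      _ = |v| ^ n := one_mul _
  have hDsum : ∀ r : ℝ, 0 < r → r < 1 → Summable (fun n : ℕ => (n : ℝ) * r ^ (n - 1)) := by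
    intro r hr0 hr1
    rw [← summable_nat_add_iff 1]
    have h1 : Summable (fun n : ℕ => (n : ℝ) * r ^ n) := by
      have := summable_pow_mul_geometric_of_norm_lt_one (R := ℝ) 1
        (r := r) (by rwa [Real.norm_eq_abs, abs_of_pos hr0])
      simpa using this
    have h2 : Summable (fun n : ℕ => r ^ n) := summable_geometric_of_lt_one hr0.le hr1
    apply (h1.add h2).congr
    intro n
    push_cast
    simp [add_mul]
  have hbound : ∀ (r v : ℝ), |v| ≤ r → ∀ n : ℕ,
      ‖a n * ((n : ℝ) * v ^ (n - 1))‖ ≤ (n : ℝ) * r ^ (n - 1) := by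
    intro r v hvr n
    have hr0 : 0 ≤ r := le_trans (abs_nonneg v) hvr
    rw [norm_mul, norm_mul, norm_pow, Real.norm_eq_abs, Real.norm_eq_abs, Real.norm_eq_abs,
      abs_of_nonneg (ha0 n), abs_of_nonneg (Nat.cast_nonneg n)]
    calc a n * ((n : ℝ) * |v| ^ (n - 1)) ≤ 1 * ((n : ℝ) * r ^ (n - 1)) := by
          gcongr
          · exact ha1 n
      _ = (n : ℝ) * r ^ (n - 1) := one_mul _
  have hDsum' : ∀ v : ℝ, |v| < 1 → Summable (fun n => a n * ((n : ℝ) * v ^ (n - 1))) := by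
    intro v hv
    have hr0 : (0:ℝ) < (|v| + 1) / 2 := by positivity
    have hr1 : (|v| + 1) / 2 < 1 := by linarith
    exact Summable.of_norm_bounded (hDsum _ hr0 hr1)
      (hbound _ v (by linarith [abs_nonneg v]))
  have hderiv : ∀ v : ℝ, |v| < 1 →
      HasDerivAt (fun z : ℝ => ∑' n, a n * z ^ n)
        (∑' n, a n * ((n : ℝ) * v ^ (n - 1))) v := by
    intro v hv
    have hvr : |v| < (|v| + 1) / 2 := by linarith
    have hr0 : (0:ℝ) < (|v| + 1) / 2 := by positivity
    have hr1 : (|v| + 1) / 2 < 1 := by linarith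
    apply hasDerivAt_tsum_of_isPreconnected (hDsum _ hr0 hr1) Metric.isOpen_ball
      (convex_ball (0:ℝ) ((|v| + 1) / 2)).isPreconnected
      (g := fun n z => a n * z ^ n)
      (g' := fun n z => a n * ((n : ℝ) * z ^ (n - 1)))
      (y₀ := v)
    · intro n y _
      exact (hasDerivAt_pow n y).const_mul (a n)
    · intro n y hy
      rw [Metric.mem_ball, _root_.dist_zero_right, Real.norm_eq_abs] at hy
      exact hbound _ y hy.le n
    · rwa [Metric.mem_ball, _root_.dist_zero_right, Real.norm_eq_abs]
    · exact hsum v hv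
    · rwa [Metric.mem_ball, _root_.dist_zero_right, Real.norm_eq_abs]
  have hode : ∀ v : ℝ, |v| < 1 →
      (1 - v) * (∑' n, a n * ((n : ℝ) * v ^ (n - 1)))
        = x * (∑' n, a n * v ^ n) := by
    intro v hv
    have h1 : (∑' n, a n * ((n : ℝ) * v ^ (n - 1)))
        = ∑' n : ℕ, a (n + 1) * (((n : ℝ) + 1) * v ^ n) := by
      rw [Summable.tsum_eq_zero_add (hDsum' v hv)]
      simp only [Nat.cast_zero, zero_mul, mul_zero, zero_add, Nat.cast_add, Nat.cast_one,
        Nat.add_sub_cancel]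
    have h2 : ∀ n : ℕ, a (n + 1) * (((n : ℝ) + 1) * v ^ n)
        = x * (a n * v ^ n) + v * (a n * ((n : ℝ) * v ^ (n - 1))) := by
      intro n
      have hr := hrec n
      push_cast at hr
      cases n with
      | zero =>
        simp only [Nat.cast_zero, zero_add, pow_zero, mul_one, zero_mul, mul_zero,
          add_zero] at hr ⊢
        linarith
      | succ m =>
        simp only [Nat.add_sub_cancel, pow_succ] at hr ⊢
        push_cast at hr ⊢
        linear_combination (v ^ m * v) * hr
    have h3 : (∑' n : ℕ, a (n + 1) * (((n : ℝ) + 1) * v ^ n))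
        = x * (∑' n, a n * v ^ n) + v * (∑' n, a n * ((n : ℝ) * v ^ (n - 1))) := by
      rw [tsum_congr h2, Summable.tsum_add ((hsum v hv).mul_left x) ((hDsum' v hv).mul_left v),
        tsum_mul_left, tsum_mul_left]
    have key := h1.trans h3
    linear_combination key
  have hgderiv : ∀ v ∈ Metric.ball (0:ℝ) 1,
      HasDerivAt (fun z : ℝ => (∑' n, a n * z ^ n) * (1 - z) ^ x) 0 v := by
    intro v hv
    rw [Metric.mem_ball, _root_.dist_zero_right, Real.norm_eq_abs] at hv
    have h1v : 0 < 1 - v := by have := abs_lt.1 hv; linarith [this.2]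
    have hfd := hderiv v hv
    have hrd : HasDerivAt (fun z : ℝ => (1 - z) ^ x) (-(x * (1 - v) ^ (x - 1))) v := by
      have h := Real.hasDerivAt_rpow_const (x := 1 - v) (p := x) (Or.inl (ne_of_gt h1v))
      have h2 : HasDerivAt (fun z : ℝ => 1 - z) (-1) v := (hasDerivAt_id v).const_sub 1
      have h3 : HasDerivAt (fun z : ℝ => (1 - z) ^ x) (x * (1 - v) ^ (x - 1) * -1) v := h.comp v h2
      convert h3 using 1
      ring
    have hmul : HasDerivAt (fun z : ℝ => (∑' n, a n * z ^ n) * (1 - z) ^ x)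
        ((∑' n, a n * ((n : ℝ) * v ^ (n - 1))) * (1 - v) ^ x + (∑' n, a n * v ^ n) * -(x * (1 - v) ^ (x - 1))) v := hfd.mul hrd
    convert hmul using 1
    have key := hode v hv
    have hpow : (1 - v) ^ x = (1 - v) ^ (x - 1) * (1 - v) := by
      nth_rewrite 1 [show x = (x - 1) + 1 by ring]
      rw [Real.rpow_add h1v, Real.rpow_one]
    rw [hpow]
    linear_combination (-(1 - v) ^ (x - 1)) * key
  have hgconst : (∑' n, a n * u ^ n) * (1 - u) ^ x
      = (∑' n, a n * (0:ℝ) ^ n) * (1 - 0) ^ x := by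
    apply (convex_ball (0:ℝ) 1).is_const_of_fderivWithin_eq_zero (𝕜 := ℝ)
      (f := fun z : ℝ => (∑' n, a n * z ^ n) * (1 - z) ^ x)
      (fun v hv => (hgderiv v hv).differentiableAt.differentiableWithinAt)
    · intro v hv
      rw [fderivWithin_of_isOpen Metric.isOpen_ball hv, (hgderiv v hv).hasFDerivAt.fderiv]
      ext z
      simp
    · rwa [Metric.mem_ball, _root_.dist_zero_right, Real.norm_eq_abs]
    · simp [Metric.mem_ball]
  have hf0 : (∑' n, a n * (0:ℝ) ^ n) = 1 := by
    rw [tsum_eq_single 0 (fun n hn => by simp [zero_pow hn])]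
    simp [ha]
  have h1u : 0 < 1 - u := by have := abs_lt.1 hu; linarith [this.2]
  have hfu : (∑' n, a n * u ^ n) = (1 - u) ^ (-x) := by
    have hone : (∑' n, a n * u ^ n) * (1 - u) ^ x = 1 := by
      rw [hgconst, hf0, one_mul, sub_zero, Real.one_rpow]
    have hpne : (1 - u) ^ x ≠ 0 := (Real.rpow_pos_of_pos h1u x).ne'
    rw [Real.rpow_neg h1u.le]
    field_simp
    linarith [hone]
  have hS := (hsum u hu).hasSum
  rwa [hfu] at hS

theorem cauchy2_generating_function (t : ℝ) (ht : |t| < 1) :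
    HasSum (fun n : ℕ => (-1 : ℝ) ^ n * cauchy2 n * t ^ n / (n ! : ℝ))
      (if t = 0 then 1 else t / ((1 + t) * Real.log (1 + t))) := by
  by_cases ht0 : t = 0
  · subst ht0
    rw [if_pos rfl]
    have := hasSum_single (f := fun n : ℕ => (-1 : ℝ) ^ n * cauchy2 n * (0:ℝ) ^ n / (n ! : ℝ))
      0 (fun n hn => by simp [zero_pow hn])
    simpa [cauchy2] using this
  · rw [if_neg ht0]
    have h1t : 0 < 1 + t := by have := abs_lt.1 ht; linarith [this.1]
    have hlog : Real.log (1 + t) ≠ 0 := by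
      intro h
      rcases Real.log_eq_zero.1 h with h | h | h <;> [linarith; exact ht0 (by linarith); linarith]
    set F : ℕ → ℝ → ℝ := fun n x => (-1 : ℝ) ^ n * (∏ i ∈ Finset.range n, (x + i)) * t ^ n / (n ! : ℝ)
      with hF
    have hFc : ∀ n, Continuous (F n) := by
      intro n
      apply Continuous.div_const
      apply Continuous.mul _ continuous_const
      exact continuous_const.mul (continuous_finset_prod _ fun i _ =>
        continuous_id.add continuous_const)
    have hFint : ∀ n, Integrable (F n) (volume.restrict (Set.Ioc (0:ℝ) 1)) :=
      fun n => (hFc n).integrableOn_Ioc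
    have hFnorm : ∀ n, ∀ x ∈ Set.Ioc (0:ℝ) 1, ‖F n x‖ ≤ |t| ^ n := by
      intro n x hx
      rw [hF]
      simp only
      rw [norm_div, norm_mul, norm_mul, norm_pow, norm_pow, Real.norm_eq_abs, Real.norm_eq_abs,
        Real.norm_eq_abs, Real.norm_eq_abs, abs_neg, abs_one, one_pow, one_mul,
        abs_of_nonneg (prod_nonneg' hx.1.le n), Nat.abs_cast]
      rw [div_le_iff₀ (by positivity : (0:ℝ) < (n ! : ℝ))]
      calc (∏ i ∈ Finset.range n, (x + i)) * |t| ^ n ≤ (n ! : ℝ) * |t| ^ n := by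
            gcongr; exact prod_le_fact hx.2 n hx.1.le
        _ = |t| ^ n * (n ! : ℝ) := by ring
    have hFsum : Summable fun n => ∫ x, ‖F n x‖ ∂(volume.restrict (Set.Ioc (0:ℝ) 1)) := by
      apply Summable.of_nonneg_of_le (fun n => integral_nonneg fun x => norm_nonneg _)
        (fun n => ?_) (summable_geometric_of_lt_one (abs_nonneg t) ht)
      calc ∫ x, ‖F n x‖ ∂(volume.restrict (Set.Ioc (0:ℝ) 1))
          ≤ ∫ _x in Set.Ioc (0:ℝ) 1, |t| ^ n := by
            apply setIntegral_mono_on ((hFint n).norm) (integrableOn_const measure_Ioc_lt_top.ne)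
              measurableSet_Ioc (hFnorm n)
        _ = |t| ^ n := by
            rw [setIntegral_const]
            simp [Real.volume_Ioc]
    have hkey := hasSum_integral_of_summable_integral_norm hFint hFsum
    have heq1 : ∀ n, (∫ x, F n x ∂(volume.restrict (Set.Ioc (0:ℝ) 1)))
        = (-1 : ℝ) ^ n * cauchy2 n * t ^ n / (n ! : ℝ) := by
      intro n
      have : F n = fun x : ℝ => ((-1 : ℝ) ^ n * t ^ n / (n ! : ℝ)) *
          (∏ i ∈ Finset.range n, (x + (i : ℝ))) := by
        ext x; rw [hF]; ring
      rw [this, integral_const_mul, cauchy2, intervalIntegral.integral_of_le zero_le_one]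
      ring
    have heq2 : (∫ x, (∑' n, F n x) ∂(volume.restrict (Set.Ioc (0:ℝ) 1)))
        = t / ((1 + t) * Real.log (1 + t)) := by
      have hpt : Set.EqOn (fun x => ∑' n, F n x) (fun x => (1 + t) ^ (-x)) (Set.Ioc 0 1) := by
        intro x hx
        have hb := hasSum_binom (u := -t) hx.1.le hx.2 (by rwa [abs_neg])
        rw [sub_neg_eq_add] at hb
        have hfe : (fun n : ℕ => (∏ i ∈ Finset.range n, (x + i)) / (n ! : ℝ) * (-t) ^ n)
            = fun n => F n x := by
          ext n
          rw [hF, neg_pow]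
          ring
        rw [hfe] at hb
        exact hb.tsum_eq
      rw [setIntegral_congr_fun measurableSet_Ioc hpt,
        ← intervalIntegral.integral_of_le zero_le_one]
      have hrw : ∀ x : ℝ, (1 + t) ^ (-x) = Real.exp (x * (-Real.log (1 + t))) := by
        intro x
        rw [Real.rpow_def_of_pos h1t]
        ring_nf
      simp only [hrw]
      have hc0 : -Real.log (1 + t) ≠ 0 := neg_ne_zero.2 hlog
      rw [intervalIntegral.integral_comp_mul_right Real.exp hc0]
      rw [zero_mul, one_mul, integral_exp, Real.exp_zero, Real.exp_neg, Real.exp_log h1t,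
        smul_eq_mul]
      have h1t' : (1 + t) ≠ 0 := ne_of_gt h1t
      rw [eq_div_iff (mul_ne_zero h1t' hlog)]
      field_simp
      ring
    rw [← heq2]
    exact (funext heq1 : _ = _) ▸ hkey
end
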